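/- Assume u ≠ 0 and v ≠ 0. Then (x,y) ∈ ℝ^m × ℝ^n is a spurious local minimum of f (a local minimum that is not a global minimum) if and only if either (|Σ_{i : u_i ≠ 0} sgn(u_i) x_i| < Σ_{i : u_i = 0} |x_i| and y = 0), or (x = 0 and |Σ_{j : v_j ≠ 0} sgn(v_j) y_j| < Σ_{j : v_j = 0} |y_j|). -/

import Mathlib

open scoped Classical

namespace SLM


lemma sign_mul_self (a : ℝ) : Real.sign a * a = |a| := by
  rcases lt_trichotomy a 0 with h|h|h
  · rw [Real.sign_of_neg h, abs_of_neg h]; ring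
  · simp [h]
  · rw [Real.sign_of_pos h, abs_of_pos h]; ring

lemma sign_mul (a b : ℝ) : Real.sign (a * b) = Real.sign a * Real.sign b := by
  rcases lt_trichotomy a 0 with h|h|h <;> rcases lt_trichotomy b 0 with h'|h'|h'
  · rw [Real.sign_of_pos (mul_pos_of_neg_of_neg h h'), Real.sign_of_neg h, Real.sign_of_neg h']
    ring
  · simp [h']
  · rw [Real.sign_of_neg (mul_neg_of_neg_of_pos h h'), Real.sign_of_neg h, Real.sign_of_pos h']
    ring
  · simp [h]
  · simp [h]
  · simp [h]
  · rw [Real.sign_of_neg (mul_neg_of_pos_of_neg h h'), Real.sign_of_pos h, Real.sign_of_neg h']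
    ring
  · simp [h']
  · rw [Real.sign_of_pos (mul_pos h h'), Real.sign_of_pos h, Real.sign_of_pos h']
    ring

lemma sign_sq {a : ℝ} (ha : a ≠ 0) : Real.sign a * Real.sign a = 1 := by
  rcases Real.sign_apply_eq_of_ne_zero a ha with h|h <;> rw [h] <;> norm_num

lemma abs_sign_le (a : ℝ) : |Real.sign a| ≤ 1 := by
  rcases Real.sign_apply_eq a with h|h|h <;> rw [h] <;> norm_num

lemma abs_sign_of_ne {a : ℝ} (ha : a ≠ 0) : |Real.sign a| = 1 := by
  rcases Real.sign_apply_eq_of_ne_zero a ha with h|h <;> rw [h] <;> norm_num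

/-- lower bound : |w| - sign w * z ≤ |z - w| -/
lemma sign_lb (w z : ℝ) : |w| - Real.sign w * z ≤ |z - w| := by
  rcases lt_trichotomy w 0 with h|h|h
  · rw [Real.sign_of_neg h, abs_of_neg h]
    have := le_abs_self (z - w); linarith
  · simp [h, abs_nonneg]
  · rw [Real.sign_of_pos h, abs_of_pos h]
    have := neg_abs_le (z - w); linarith

/-- equality case: if |z| ≤ |w| then |z - w| = |w| - sign w * z -/
lemma sign_eq_of_le {w z : ℝ} (h : |z| ≤ |w|) : |z - w| = |w| - Real.sign w * z := by
  have h1 := abs_le.1 h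
  rcases lt_trichotomy w 0 with hw|hw|hw
  · rw [Real.sign_of_neg hw]
    rw [abs_of_neg hw] at h1
    rw [abs_of_neg hw, abs_of_nonneg (by linarith [h1.2])]
    ring
  · subst hw; simp only [abs_zero] at h
    have : z = 0 := abs_eq_zero.1 (le_antisymm h (abs_nonneg z))
    simp [this]
  · rw [Real.sign_of_pos hw]
    rw [abs_of_pos hw] at h1
    rw [abs_of_pos hw, abs_of_nonpos (by linarith [h1.1])]
    ring

/-- descent path lemma -/
lemma not_isLocalMin_of_descent {X : Type*} [TopologicalSpace X] {f : X → ℝ} {z : X}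
    (p : ℝ → X) (hp : Filter.Tendsto p (nhdsWithin 0 (Set.Ioi 0)) (nhds z))
    (hlt : ∀ t ∈ Set.Ioo (0:ℝ) 1, f (p t) < f z) : ¬ IsLocalMin f z := by
  intro h
  have h1 : ∀ᶠ t in nhdsWithin (0:ℝ) (Set.Ioi 0), f z ≤ f (p t) := hp.eventually h
  have h2 : ∀ᶠ t in nhdsWithin (0:ℝ) (Set.Ioi 0), t ∈ Set.Ioo (0:ℝ) 1 :=
    Ioo_mem_nhdsGT_of_mem ⟨le_refl 0, one_pos⟩
  obtain ⟨t, ht1, ht2⟩ := (h1.and h2).exists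
  exact absurd ht1 (not_le.2 (hlt t ht2))

lemma isLocalMin_comp {X Y : Type*} [TopologicalSpace X] [TopologicalSpace Y] {f : X → ℝ}
    {a : X} (h : IsLocalMin f a) {g : Y → X} {b : Y} (hg : ContinuousAt g b) (hgb : g b = a) :
    IsLocalMin (fun y => f (g y)) b := by
  have ht : Filter.Tendsto g (nhds b) (nhds a) := by rw [← hgb]; exact hg.tendsto
  have h2 := ht.eventually h
  exact h2.mono fun y hy => by simpa [hgb] using hy




/-- A weighted finite sum of absolute values attains its minimum at a kink point. -/
lemma exists_kink {ι : Type*} (J : Finset ι) (hJ : J.Nonempty) (w z : ι → ℝ)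
    (hw : ∀ j ∈ J, 0 < w j) :
    ∃ j0 ∈ J, ∀ t : ℝ, ∑ j ∈ J, w j * |z j0 - z j| ≤ ∑ j ∈ J, w j * |t - z j| := by
  set φ : ℝ → ℝ := fun t => ∑ j ∈ J, w j * |t - z j| with hφ
  obtain ⟨j0, hj0, hmin⟩ := J.exists_min_image (fun j => φ (z j)) hJ
  refine ⟨j0, hj0, fun t => ?_⟩
  show φ (z j0) ≤ φ t
  by_cases hE : ∃ j ∈ J, z j = t
  · obtain ⟨j, hj, hzj⟩ := hE
    calc φ (z j0) ≤ φ (z j) := hmin j hj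
    _ = φ t := by rw [hzj]
  · push_neg at hE
    -- all kinks differ from t
    set L := ∑ j ∈ J.filter (fun j => z j < t), w j with hL
    set R := ∑ j ∈ J.filter (fun j => ¬ z j < t), w j with hR
    have hsum : L + R = ∑ j ∈ J, w j := Finset.sum_filter_add_sum_filter_not J _ w
    have hpos : 0 < ∑ j ∈ J, w j := Finset.sum_pos hw hJ
    have hLnn : 0 ≤ L := Finset.sum_nonneg fun j hj => (hw j (Finset.mem_filter.1 hj).1).le
    have hRnn : 0 ≤ R := Finset.sum_nonneg fun j hj => (hw j (Finset.mem_filter.1 hj).1).le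
    -- key difference identity, for a point z j' with appropriate side
    have key : ∀ j' ∈ J, (∀ j ∈ J, z j < t → z j ≤ z j') → (z j' < t) →
        φ (z j') - φ t = (z j' - t) * (L - R) := by
      intro j' hj' hmax hj't
      have : φ (z j') - φ t = ∑ j ∈ J, (w j * |z j' - z j| - w j * |t - z j|) := by
        rw [Finset.sum_sub_distrib]
      rw [this, ← Finset.sum_filter_add_sum_filter_not J (fun j => z j < t)]
      have e1 : ∑ j ∈ J.filter (fun j => z j < t), (w j * |z j' - z j| - w j * |t - z j|)
          = (z j' - t) * L := by
        rw [hL, Finset.mul_sum]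
        refine Finset.sum_congr rfl fun j hj => ?_
        obtain ⟨hjJ, hjlt⟩ := Finset.mem_filter.1 hj
        rw [abs_of_nonneg (by linarith [hmax j hjJ hjlt] : (0:ℝ) ≤ z j' - z j),
          abs_of_nonneg (by linarith : (0:ℝ) ≤ t - z j)]
        ring
      have e2 : ∑ j ∈ J.filter (fun j => ¬ z j < t), (w j * |z j' - z j| - w j * |t - z j|)
          = -((z j' - t) * R) := by
        rw [hR, Finset.mul_sum, ← Finset.sum_neg_distrib]
        refine Finset.sum_congr rfl fun j hj => ?_
        obtain ⟨hjJ, hjge⟩ := Finset.mem_filter.1 hj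
        have hgt : t < z j := lt_of_le_of_ne (not_lt.1 hjge) (fun h => hE j hjJ h.symm)
        rw [abs_of_nonpos (by linarith : z j' - z j ≤ 0), abs_of_nonpos (by linarith : t - z j ≤ 0)]
        ring
      rw [e1, e2]; ring
    have key2 : ∀ j' ∈ J, (∀ j ∈ J, t < z j → z j' ≤ z j) → (t < z j') →
        φ (z j') - φ t = (z j' - t) * (L - R) := by
      intro j' hj' hmin' hj't
      have : φ (z j') - φ t = ∑ j ∈ J, (w j * |z j' - z j| - w j * |t - z j|) := by
        rw [Finset.sum_sub_distrib]
      rw [this, ← Finset.sum_filter_add_sum_filter_not J (fun j => z j < t)]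
      have e1 : ∑ j ∈ J.filter (fun j => z j < t), (w j * |z j' - z j| - w j * |t - z j|)
          = (z j' - t) * L := by
        rw [hL, Finset.mul_sum]
        refine Finset.sum_congr rfl fun j hj => ?_
        obtain ⟨hjJ, hjlt⟩ := Finset.mem_filter.1 hj
        rw [abs_of_nonneg (by linarith : (0:ℝ) ≤ z j' - z j),
          abs_of_nonneg (by linarith : (0:ℝ) ≤ t - z j)]
        ring
      have e2 : ∑ j ∈ J.filter (fun j => ¬ z j < t), (w j * |z j' - z j| - w j * |t - z j|)
          = -((z j' - t) * R) := by
        rw [hR, Finset.mul_sum, ← Finset.sum_neg_distrib]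
        refine Finset.sum_congr rfl fun j hj => ?_
        obtain ⟨hjJ, hjge⟩ := Finset.mem_filter.1 hj
        have hgt : t < z j := lt_of_le_of_ne (not_lt.1 hjge) (fun h => hE j hjJ h.symm)
        rw [abs_of_nonpos (by linarith [hmin' j hjJ hgt] : z j' - z j ≤ 0),
          abs_of_nonpos (by linarith : t - z j ≤ 0)]
        ring
      rw [e1, e2]; ring
    rcases le_or_gt R L with hRL | hRL
    · -- pick max kink below t
      have hLpos : 0 < L := by linarith
      have hA : (J.filter (fun j => z j < t)).Nonempty := by
        by_contra hc
        rw [Finset.not_nonempty_iff_eq_empty] at hc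
        rw [hL, hc, Finset.sum_empty] at hLpos; exact lt_irrefl 0 hLpos
      obtain ⟨j', hj'A, hmax⟩ := Finset.exists_max_image _ (fun j => z j) hA
      obtain ⟨hj'J, hj't⟩ := Finset.mem_filter.1 hj'A
      have hd := key j' hj'J (fun j hj hjlt => hmax j (Finset.mem_filter.2 ⟨hj, hjlt⟩)) hj't
      have : φ (z j') ≤ φ t := by nlinarith
      exact le_trans (hmin j' hj'J) this
    · -- pick min kink above t
      have hRpos : 0 < R := by linarith
      have hA : (J.filter (fun j => ¬ z j < t)).Nonempty := by
        by_contra hc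
        rw [Finset.not_nonempty_iff_eq_empty] at hc
        rw [hR, hc, Finset.sum_empty] at hRpos; exact lt_irrefl 0 hRpos
      obtain ⟨j', hj'A, hmin'⟩ := Finset.exists_min_image _ (fun j => z j) hA
      obtain ⟨hj'J, hj't⟩ := Finset.mem_filter.1 hj'A
      have hj't' : t < z j' := lt_of_le_of_ne (not_lt.1 hj't) (fun h => hE j' hj'J h.symm)
      have hd := key2 j' hj'J
        (fun j hj hjgt => hmin' j (Finset.mem_filter.2 ⟨hj, not_lt.2 hjgt.le⟩)) hj't'
      have : φ (z j') ≤ φ t := by nlinarith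
      exact le_trans (hmin j' hj'J) this



noncomputable def F (u : Fin m → ℝ) (v : Fin n → ℝ) : ((Fin m → ℝ) × (Fin n → ℝ)) → ℝ :=
  fun q => ∑ i, ∑ j, |q.1 i * q.2 j - u i * v j|

lemma F_x0 (u : Fin m → ℝ) (v : Fin n → ℝ) (x : Fin m → ℝ) :
    F u v (x, 0) = ∑ i, ∑ j, |u i * v j| := by
  unfold F; simp

lemma coreA (u : Fin m → ℝ) (v : Fin n → ℝ) (x : Fin m → ℝ)
    (hcond : |∑ i ∈ Finset.univ.filter (fun i => u i ≠ 0), Real.sign (u i) * x i|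
      < ∑ i ∈ Finset.univ.filter (fun i => u i = 0), |x i|) :
    IsLocalMin (F u v) (x, 0) := by
  classical
  set S : (Fin m → ℝ) → ℝ :=
    fun a => ∑ i ∈ Finset.univ.filter (fun i => u i ≠ 0), Real.sign (u i) * a i with hS
  set T : (Fin m → ℝ) → ℝ :=
    fun a => ∑ i ∈ Finset.univ.filter (fun i => u i = 0), |a i| with hT
  have hcont : Continuous fun q : (Fin m → ℝ) × (Fin n → ℝ) => |S q.1| - T q.1 := by
    apply Continuous.sub
    · apply Continuous.abs
      apply continuous_finset_sum
      intro i _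
      exact (continuous_const.mul ((continuous_apply i).comp continuous_fst))
    · apply continuous_finset_sum
      intro i _
      exact ((continuous_apply i).comp continuous_fst).abs
  have hopen : IsOpen {q : (Fin m → ℝ) × (Fin n → ℝ) | |S q.1| - T q.1 < 0} :=
    isOpen_lt hcont continuous_const
  have hmem : ((x, 0) : (Fin m → ℝ) × (Fin n → ℝ)) ∈
      {q : (Fin m → ℝ) × (Fin n → ℝ) | |S q.1| - T q.1 < 0} := by
    simp only [Set.mem_setOf_eq]; linarith [hcond]
  refine Filter.eventually_of_mem (hopen.mem_nhds hmem) ?_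
  rintro ⟨a, b⟩ hq
  simp only [Set.mem_setOf_eq] at hq
  have hST : |S a| ≤ T a := by linarith
  -- lower bound for F (a, b)
  set B : ℝ := ∑ j, |b j| with hB
  set S' : ℝ := ∑ j, Real.sign (v j) * b j with hS'
  have step1 : ∀ i, ∀ j, (if u i = 0 then |a i| * |b j|
      else |u i * v j| - (Real.sign (u i) * a i) * (Real.sign (v j) * b j))
        ≤ |a i * b j - u i * v j| := by
    intro i j
    by_cases h : u i = 0
    · rw [if_pos h, h, zero_mul, sub_zero, abs_mul]
    · simp only [if_neg h]
      have := sign_lb (u i * v j) (a i * b j)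
      calc |u i * v j| - (Real.sign (u i) * a i) * (Real.sign (v j) * b j)
          = |u i * v j| - Real.sign (u i * v j) * (a i * b j) := by rw [sign_mul]; ring
        _ ≤ |a i * b j - u i * v j| := this
  have step2 : ∑ i, ∑ j, (if u i = 0 then |a i| * |b j|
      else |u i * v j| - (Real.sign (u i) * a i) * (Real.sign (v j) * b j))
      = T a * B + ((∑ i, ∑ j, |u i * v j|) - S a * S') := by
    rw [← Finset.sum_filter_add_sum_filter_not Finset.univ (fun i => u i = 0)]
    have e1 : ∑ i ∈ Finset.univ.filter (fun i => u i = 0), (∑ j, (if u i = 0 then |a i| * |b j|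
        else |u i * v j| - (Real.sign (u i) * a i) * (Real.sign (v j) * b j))) = T a * B := by
      rw [hT, Finset.sum_mul]
      refine Finset.sum_congr rfl fun i hi => ?_
      have h := (Finset.mem_filter.1 hi).2
      simp only [if_pos h]
      rw [Finset.mul_sum]
    have e2 : ∑ i ∈ Finset.univ.filter (fun i => ¬ u i = 0), (∑ j, (if u i = 0 then |a i| * |b j|
        else |u i * v j| - (Real.sign (u i) * a i) * (Real.sign (v j) * b j)))
        = (∑ i, ∑ j, |u i * v j|) - S a * S' := by
      have e3 : ∀ i ∈ Finset.univ.filter (fun i => ¬ u i = 0),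
          (∑ j, (if u i = 0 then |a i| * |b j|
          else |u i * v j| - (Real.sign (u i) * a i) * (Real.sign (v j) * b j)))
          = (∑ j, |u i * v j|) - (Real.sign (u i) * a i) * S' := by
        intro i hi
        have h := (Finset.mem_filter.1 hi).2
        simp only [if_neg h]
        rw [Finset.sum_sub_distrib, hS', Finset.mul_sum]
      rw [Finset.sum_congr rfl e3, Finset.sum_sub_distrib, ← Finset.sum_mul]
      have e4 : ∑ i ∈ Finset.univ.filter (fun i => ¬ u i = 0), (∑ j, |u i * v j|)
          = ∑ i, ∑ j, |u i * v j| := by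
        apply Finset.sum_subset (Finset.filter_subset _ _)
        intro i _ hi
        simp only [Finset.mem_filter, Finset.mem_univ, true_and, not_not] at hi
        simp [hi]
      rw [e4, hS]
    rw [e1, e2]
  have hFq : T a * B + ((∑ i, ∑ j, |u i * v j|) - S a * S') ≤ F (u := u) (v := v) (a, b) := by
    rw [← step2]
    unfold F
    exact Finset.sum_le_sum fun i _ => Finset.sum_le_sum fun j _ => step1 i j
  have hBnn : 0 ≤ B := Finset.sum_nonneg fun j _ => abs_nonneg _
  have hS'B : |S'| ≤ B := by
    calc |S'| ≤ ∑ j, |Real.sign (v j) * b j| := Finset.abs_sum_le_sum_abs _ _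
      _ ≤ ∑ j, |b j| := by
        refine Finset.sum_le_sum fun j _ => ?_
        rw [abs_mul]
        calc |Real.sign (v j)| * |b j| ≤ 1 * |b j| :=
            mul_le_mul_of_nonneg_right (abs_sign_le _) (abs_nonneg _)
          _ = |b j| := one_mul _
  have hprod : S a * S' ≤ T a * B := by
    calc S a * S' ≤ |S a * S'| := le_abs_self _
      _ = |S a| * |S'| := abs_mul _ _
      _ ≤ |S a| * B := mul_le_mul_of_nonneg_left hS'B (abs_nonneg _)
      _ ≤ T a * B := mul_le_mul_of_nonneg_right hST hBnn
  rw [F_x0]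
  linarith





lemma coreB (u : Fin m → ℝ) (v : Fin n → ℝ) (hu : u ≠ 0) (hv : v ≠ 0) (x : Fin m → ℝ)
    (hcond : ¬ (|∑ i ∈ Finset.univ.filter (fun i => u i ≠ 0), Real.sign (u i) * x i|
      < ∑ i ∈ Finset.univ.filter (fun i => u i = 0), |x i|)) :
    ¬ IsLocalMin (F u v) (x, 0) := by
  classical
  obtain ⟨i0, hi0⟩ := Function.ne_iff.1 hu
  obtain ⟨j0, hj0⟩ := Function.ne_iff.1 hv
  simp only [Pi.zero_apply] at hi0 hj0
  set S : ℝ := ∑ i ∈ Finset.univ.filter (fun i => u i ≠ 0), Real.sign (u i) * x i with hS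
  set T : ℝ := ∑ i ∈ Finset.univ.filter (fun i => u i = 0), |x i| with hT
  have hTS : T ≤ |S| := not_lt.1 hcond
  set σ : ℝ := if 0 ≤ S then 1 else -1 with hσ
  have hσS : σ * S = |S| := by
    by_cases h : 0 ≤ S
    · rw [hσ, if_pos h, abs_of_nonneg h, one_mul]
    · rw [hσ, if_neg h, abs_of_neg (not_le.1 h)]; ring
  have hσsq : σ * σ = 1 := by
    by_cases h : 0 ≤ S <;> simp [hσ, h]
  have hσabs : |σ| = 1 := by
    by_cases h : 0 ≤ S <;> simp [hσ, h]
  set M0 : ℝ := (∑ i, |x i|) + 1 with hM0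
  have hM0pos : 0 < M0 := by
    have : (0:ℝ) ≤ ∑ i, |x i| := Finset.sum_nonneg fun i _ => abs_nonneg _
    rw [hM0]; linarith
  have hxM : ∀ i, |x i| ≤ ∑ i', |x i'| :=
    fun i => Finset.single_le_sum (fun i' _ => abs_nonneg (x i')) (Finset.mem_univ i)
  set pairs : Finset (Fin m × Fin n) :=
    Finset.univ.filter (fun p => u p.1 ≠ 0 ∧ v p.2 ≠ 0) with hpairs
  have hpne : pairs.Nonempty := by
    have hmem2 : ((i0, j0) : Fin m × Fin n) ∈ pairs := by
      rw [hpairs]; exact Finset.mem_filter.2 ⟨Finset.mem_univ _, hi0, hj0⟩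
    exact ⟨_, hmem2⟩
  set m0 : ℝ := pairs.inf' hpne (fun p => |u p.1 * v p.2|) with hm0
  have hm0pos : 0 < m0 := by
    rw [hm0, Finset.lt_inf'_iff]
    intro p hp
    obtain ⟨_, h1, h2⟩ := Finset.mem_filter.1 hp
    exact abs_pos.2 (mul_ne_zero h1 h2)
  have hm0le : ∀ i j, u i ≠ 0 → v j ≠ 0 → m0 ≤ |u i * v j| := by
    intro i j h1 h2
    have hmem2 : ((i, j) : Fin m × Fin n) ∈ pairs := by
      rw [hpairs]; exact Finset.mem_filter.2 ⟨Finset.mem_univ _, h1, h2⟩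
    exact Finset.inf'_le _ hmem2
  set ε0 : ℝ := m0 / M0 with hε0
  have hε0pos : 0 < ε0 := div_pos hm0pos hM0pos
  set p : ℝ → (Fin m → ℝ) × (Fin n → ℝ) := fun t =>
    (fun i => x i + t * (σ * Real.sign (u i)), fun j => (t * ε0) * (σ * Real.sign (v j))) with hp
  have hcont : Continuous p := by
    apply Continuous.prodMk
    · exact continuous_pi fun i => continuous_const.add (continuous_id.mul continuous_const)
    · exact continuous_pi fun j => (continuous_id.mul continuous_const).mul continuous_const
  have hp0 : p 0 = (x, (0 : Fin n → ℝ)) := by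
    rw [hp]
    exact Prod.ext (funext fun i => by simp) (funext fun j => by simp)
  have htend : Filter.Tendsto p (nhdsWithin 0 (Set.Ioi 0)) (nhds (x, (0:Fin n → ℝ))) := by
    have := hcont.tendsto 0
    rw [hp0] at this
    exact this.mono_left nhdsWithin_le_nhds
  apply not_isLocalMin_of_descent p htend
  intro t ht
  obtain ⟨ht0, ht1⟩ := ht
  set Δ : Fin m → Fin n → ℝ := fun i j => if v j = 0 then 0 else
    (if u i = 0 then t * ε0 * |x i| else -(t * ε0 * (σ * Real.sign (u i) * x i + t))) with hΔ
  have hterm : ∀ i j, |(p t).1 i * (p t).2 j - u i * v j| ≤ |u i * v j| + Δ i j := by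
    intro i j
    have hpt1 : (p t).1 i = x i + t * (σ * Real.sign (u i)) := rfl
    have hpt2 : (p t).2 j = (t * ε0) * (σ * Real.sign (v j)) := rfl
    rw [hpt1, hpt2]
    simp only [hΔ]
    by_cases hvj : v j = 0
    · simp [hvj, Real.sign_zero]
    · by_cases hui : u i = 0
      · rw [if_neg hvj, if_pos hui, hui, Real.sign_zero]
        simp only [mul_zero, add_zero, zero_mul, sub_zero, abs_mul, abs_zero]
        rw [abs_of_pos ht0, abs_of_pos hε0pos, hσabs, abs_sign_of_ne hvj]
        exact le_of_eq (by ring)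
      · -- both nonzero
        have ha : |x i + t * (σ * Real.sign (u i))| ≤ M0 := by
          calc |x i + t * (σ * Real.sign (u i))| ≤ |x i| + |t * (σ * Real.sign (u i))| :=
              abs_add_le _ _
            _ ≤ |x i| + t * 1 := by
                rw [abs_mul, abs_of_pos ht0, abs_mul, hσabs, one_mul]
                exact add_le_add_right (mul_le_mul_of_nonneg_left (abs_sign_le _) ht0.le) _
            _ ≤ (∑ i', |x i'|) + 1 := by
                have := hxM i
                linarith
        have hb : |(t * ε0) * (σ * Real.sign (v j))| = t * ε0 := by
          rw [abs_mul, abs_mul, abs_mul, abs_of_pos ht0, abs_of_pos hε0pos, hσabs,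
            abs_sign_of_ne hvj]
          ring
        have hsmall : |(x i + t * (σ * Real.sign (u i))) * ((t * ε0) * (σ * Real.sign (v j)))|
            ≤ |u i * v j| := by
          rw [abs_mul, hb]
          calc |x i + t * (σ * Real.sign (u i))| * (t * ε0) ≤ M0 * (t * ε0) :=
              mul_le_mul_of_nonneg_right ha (by positivity)
            _ = t * m0 := by
                rw [hε0]
                field_simp
            _ ≤ m0 := by nlinarith
            _ ≤ |u i * v j| := hm0le i j hui hvj
        rw [sign_eq_of_le hsmall, sign_mul]
        have h1 := sign_sq hui
        have h2 := sign_sq hvj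
        have hexp : Real.sign (u i) * Real.sign (v j) *
            ((x i + t * (σ * Real.sign (u i))) * ((t * ε0) * (σ * Real.sign (v j))))
            = t * ε0 * (σ * Real.sign (u i) * x i + t) := by
          calc Real.sign (u i) * Real.sign (v j) *
              ((x i + t * (σ * Real.sign (u i))) * ((t * ε0) * (σ * Real.sign (v j))))
              = (Real.sign (v j) * Real.sign (v j)) *
                ((Real.sign (u i) * Real.sign (u i)) * ((σ * σ) * (t * (t * ε0)))
                  + (Real.sign (u i) * σ) * ((t * ε0) * x i)) := by ring
            _ = t * ε0 * (σ * Real.sign (u i) * x i + t) := by rw [h1, h2, hσsq]; ring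
        rw [hexp]
        simp only [if_neg hvj, if_neg hui]
        exact le_of_eq (by ring)
  -- sum the per-term bounds
  have hsum : F u v (p t) ≤ F u v (x, 0) + ∑ j, ∑ i, Δ i j := by
    have h1 : F u v (p t) ≤ ∑ i, ∑ j, (|u i * v j| + Δ i j) := by
      unfold F
      exact Finset.sum_le_sum fun i _ => Finset.sum_le_sum fun j _ => hterm i j
    have h2 : ∑ i, ∑ j, (|u i * v j| + Δ i j)
        = (∑ i, ∑ j, |u i * v j|) + ∑ i, ∑ j, Δ i j := by
      rw [← Finset.sum_add_distrib]
      exact Finset.sum_congr rfl fun i _ => Finset.sum_add_distrib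
    rw [F_x0]
    calc F u v (p t) ≤ ∑ i, ∑ j, (|u i * v j| + Δ i j) := h1
      _ = (∑ i, ∑ j, |u i * v j|) + ∑ i, ∑ j, Δ i j := h2
      _ = (∑ i, ∑ j, |u i * v j|) + ∑ j, ∑ i, Δ i j := by
          rw [show (∑ i, ∑ j, Δ i j) = ∑ j, ∑ i, Δ i j from Finset.sum_comm]
  set Nu : ℕ := (Finset.univ.filter (fun i => u i ≠ 0)).card with hNu
  have hNu1 : 1 ≤ Nu := Finset.card_pos.2 ⟨i0, by simp [hi0]⟩
  set Nv : ℕ := (Finset.univ.filter (fun j => v j ≠ 0)).card with hNv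
  have hNv1 : 1 ≤ Nv := Finset.card_pos.2 ⟨j0, by simp [hj0]⟩
  have hinner : ∀ j, ∑ i, Δ i j = if v j = 0 then 0 else
      t * ε0 * (T - σ * S - t * Nu) := by
    intro j
    by_cases hvj : v j = 0
    · simp [hΔ, hvj]
    · rw [if_neg hvj]
      have : ∀ i, Δ i j = if u i = 0 then t * ε0 * |x i|
          else -(t * ε0 * (σ * Real.sign (u i) * x i + t)) := by
        intro i; rw [hΔ]; simp [hvj]
      rw [Finset.sum_congr rfl fun i _ => this i, Finset.sum_ite]
      have e1 : ∑ i ∈ Finset.univ.filter (fun i => u i = 0), t * ε0 * |x i|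
          = t * ε0 * T := by rw [hT, Finset.mul_sum]
      have e2 : ∑ i ∈ Finset.univ.filter (fun i => ¬ u i = 0),
          (t * ε0 * (σ * Real.sign (u i) * x i + t))
          = t * ε0 * (σ * S + t * Nu) := by
        have h3 : ∀ i ∈ Finset.univ.filter (fun i => ¬ u i = 0),
            t * ε0 * (σ * Real.sign (u i) * x i + t)
            = (t * ε0 * σ) * (Real.sign (u i) * x i) + t * ε0 * t := by
          intro i _; ring
        rw [Finset.sum_congr rfl h3, Finset.sum_add_distrib, ← Finset.mul_sum,
          Finset.sum_const]
        have hfe : Finset.univ.filter (fun i => ¬ u i = 0)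
            = Finset.univ.filter (fun i => u i ≠ 0) := rfl
        rw [hfe, ← hS, ← hNu, nsmul_eq_mul]
        ring
      rw [e1, Finset.sum_neg_distrib, e2]
      ring
  have htot : ∑ j, ∑ i, Δ i j = Nv * (t * ε0 * (T - σ * S - t * Nu)) := by
    rw [Finset.sum_congr rfl fun j _ => hinner j, Finset.sum_ite, Finset.sum_const,
      Finset.sum_const]
    have hfe : Finset.univ.filter (fun j => ¬ v j = 0)
        = Finset.univ.filter (fun j => v j ≠ 0) := rfl
    rw [hfe, ← hNv]
    simp [nsmul_eq_mul]
  have hneg : Nv * (t * ε0 * (T - σ * S - t * Nu)) < 0 := by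
    have h1 : T - σ * S - t * Nu < 0 := by
      rw [hσS]
      have : (1:ℝ) ≤ (Nu:ℝ) := by exact_mod_cast hNu1
      nlinarith
    have h2 : (0:ℝ) < (Nv:ℝ) := by exact_mod_cast hNv1
    have h3 : t * ε0 * (T - σ * S - t * Nu) < 0 := by
      apply mul_neg_of_pos_of_neg (by positivity) h1
    exact mul_neg_of_pos_of_neg h2 h3
  calc F u v (p t) ≤ F u v (x, 0) + ∑ j, ∑ i, Δ i j := hsum
    _ < F u v (x, 0) := by rw [htot]; linarith





lemma coreC (u : Fin m → ℝ) (v : Fin n → ℝ) (hu : u ≠ 0) (x : Fin m → ℝ) (y : Fin n → ℝ)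
    (hx : x ≠ 0) (hy : y ≠ 0) (hloc : IsLocalMin (F u v) (x, y)) :
    ∀ p, F u v (x, y) ≤ F u v p := by
  classical
  suffices hle : F u v (x, y) ≤ 0 by
    intro p
    have : 0 ≤ F u v p :=
      Finset.sum_nonneg fun i _ => Finset.sum_nonneg fun j _ => abs_nonneg _
    linarith
  by_contra hf0
  push_neg at hf0
  -- hf0 : 0 < F u v (x, y)
  -- row-slice optimality
  have rowOpt : ∀ (i : Fin m) (s : ℝ),
      (∑ j, |x i * y j - u i * v j|) ≤ ∑ j, |s * y j - u i * v j| := by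
    intro i s
    by_contra hlt
    push_neg at hlt
    set d : ℝ := s - x i with hd
    set p : ℝ → (Fin m → ℝ) × (Fin n → ℝ) :=
      fun t => (Function.update x i (x i + t * d), y) with hp
    have hcont : Continuous p := by
      refine Continuous.prodMk ?_ continuous_const
      apply continuous_pi
      intro i'
      have hcomp : (fun t : ℝ => Function.update x i (x i + t * d) i')
          = fun t : ℝ => if i' = i then x i + t * d else x i' := by
        funext t; rw [Function.update_apply]
      rw [hcomp]
      by_cases h : i' = i
      · simp only [if_pos h]
        exact continuous_const.add (continuous_id.mul continuous_const)
      · simp only [if_neg h]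
        exact continuous_const
    have hp0 : p 0 = (x, y) := by
      rw [hp]
      refine Prod.ext ?_ rfl
      show Function.update x i (x i + 0 * d) = x
      rw [zero_mul, add_zero, Function.update_eq_self]
    have htend : Filter.Tendsto p (nhdsWithin 0 (Set.Ioi 0)) (nhds ((x, y))) := by
      have := hcont.tendsto 0
      rw [hp0] at this
      exact this.mono_left nhdsWithin_le_nhds
    refine (not_isLocalMin_of_descent p htend ?_) hloc
    rintro t ⟨ht0, ht1⟩
    have hdecomp : ∀ z : Fin m → ℝ, F u v (z, y)
        = (∑ j, |z i * y j - u i * v j|)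
          + ∑ i' ∈ Finset.univ.erase i, ∑ j, |z i' * y j - u i' * v j| := by
      intro z
      exact (Finset.add_sum_erase _ _ (Finset.mem_univ i)).symm
    have hpt : F u v (p t) = F u v (Function.update x i (x i + t * d), y) := rfl
    rw [hpt, hdecomp (Function.update x i (x i + t * d)), hdecomp x]
    have hrest : ∑ i' ∈ Finset.univ.erase i, ∑ j,
        |Function.update x i (x i + t * d) i' * y j - u i' * v j|
        = ∑ i' ∈ Finset.univ.erase i, ∑ j, |x i' * y j - u i' * v j| := by
      refine Finset.sum_congr rfl fun i' hi' => ?_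
      rw [Function.update_of_ne (Finset.ne_of_mem_erase hi')]
    rw [hrest, Function.update_self]
    have hhead : ∑ j, |(x i + t * d) * y j - u i * v j|
        ≤ (1 - t) * (∑ j, |x i * y j - u i * v j|) + t * (∑ j, |s * y j - u i * v j|) := by
      rw [Finset.mul_sum, Finset.mul_sum, ← Finset.sum_add_distrib]
      refine Finset.sum_le_sum fun j _ => ?_
      have hid : (x i + t * d) * y j - u i * v j
          = (1 - t) * (x i * y j - u i * v j) + t * (s * y j - u i * v j) := by
        rw [hd]; ring
      rw [hid]
      calc |(1 - t) * (x i * y j - u i * v j) + t * (s * y j - u i * v j)|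
          ≤ |(1 - t) * (x i * y j - u i * v j)| + |t * (s * y j - u i * v j)| := abs_add_le _ _
        _ = (1 - t) * |x i * y j - u i * v j| + t * |s * y j - u i * v j| := by
            rw [abs_mul, abs_mul, abs_of_pos (by linarith : (0:ℝ) < 1 - t),
              abs_of_pos ht0]
    have : ∑ j, |(x i + t * d) * y j - u i * v j| < ∑ j, |x i * y j - u i * v j| := by
      nlinarith
    linarith
  -- u i = 0 implies x i = 0
  obtain ⟨j1, hj1⟩ := Function.ne_iff.1 hy
  simp only [Pi.zero_apply] at hj1
  have hx0 : ∀ i, u i = 0 → x i = 0 := by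
    intro i hui
    have h := rowOpt i 0
    simp only [hui, zero_mul, sub_zero, mul_zero, zero_sub, abs_neg, abs_zero] at h
    -- h : ∑ j, |x i * y j| ≤ 0
    have hz : ∀ j ∈ Finset.univ, |x i * y j| = 0 := by
      have hnn : ∀ j ∈ Finset.univ, (0:ℝ) ≤ |x i * y j| := fun j _ => abs_nonneg _
      have := Finset.sum_nonneg hnn
      have hzero : ∑ j, |x i * y j| = 0 := le_antisymm (by simpa using h) this
      exact (Finset.sum_eq_zero_iff_of_nonneg hnn).1 hzero
    have := hz j1 (Finset.mem_univ j1)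
    rcases mul_eq_zero.1 (abs_eq_zero.1 this) with h'|h'
    · exact h'
    · exact absurd h' hj1
  -- the one-variable function K
  set K : ℝ → ℝ := fun s => ∑ j, |s * y j - v j| with hK
  have he1 : ∀ i, u i ≠ 0 → ∀ j, |x i * y j - u i * v j| = |u i| * |(x i / u i) * y j - v j| := by
    intro i hui j
    rw [← abs_mul]
    congr 1
    field_simp
  have hF2 : ∀ i, u i ≠ 0 → ∀ s, K (x i / u i) ≤ K s := by
    intro i hui s
    have h := rowOpt i (u i * s)
    have he2 : ∀ j, |(u i * s) * y j - u i * v j| = |u i| * |s * y j - v j| := by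
      intro j; rw [← abs_mul]; congr 1; ring
    rw [Finset.sum_congr rfl (fun j _ => he1 i hui j),
      Finset.sum_congr rfl (fun j _ => he2 j), ← Finset.mul_sum, ← Finset.mul_sum] at h
    exact le_of_mul_le_mul_left h (abs_pos.2 hui)
  have hF4 : ∀ i, (∑ j, |x i * y j - u i * v j|) = |u i| * K (x i / u i) := by
    intro i
    by_cases hui : u i = 0
    · rw [hui, hx0 i hui]
      simp [hK]
    · simp only [hK]
      rw [Finset.mul_sum]
      exact Finset.sum_congr rfl fun j _ => he1 i hui j
  -- the one-variable function H and kink minimization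
  set H : ℝ → ℝ := fun τ => ∑ i, |τ * x i - u i| with hH
  set J : Finset (Fin m) := Finset.univ.filter (fun i => x i ≠ 0) with hJ
  have hJne : J.Nonempty := by
    obtain ⟨i0, hi0⟩ := Function.ne_iff.1 hx
    simp only [Pi.zero_apply] at hi0
    exact ⟨i0, by rw [hJ]; exact Finset.mem_filter.2 ⟨Finset.mem_univ _, hi0⟩⟩
  obtain ⟨i1, hi1J, hmin⟩ := exists_kink J hJne (fun i => |x i|) (fun i => u i / x i)
    (fun i hi => abs_pos.2 (by rw [hJ] at hi; exact (Finset.mem_filter.1 hi).2))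
  have hx1 : x i1 ≠ 0 := by rw [hJ] at hi1J; exact (Finset.mem_filter.1 hi1J).2
  have hu1 : u i1 ≠ 0 := fun h => hx1 (hx0 i1 h)
  have hHsplit : ∀ τ, H τ = (∑ i ∈ J, |x i| * |τ - u i / x i|)
      + ∑ i ∈ Finset.univ.filter (fun i => ¬ x i ≠ 0), |u i| := by
    intro τ
    simp only [hH]
    rw [← Finset.sum_filter_add_sum_filter_not Finset.univ (fun i => x i ≠ 0), ← hJ]
    congr 1
    · refine Finset.sum_congr rfl fun i hi => ?_
      have hxi : x i ≠ 0 := by rw [hJ] at hi; exact (Finset.mem_filter.1 hi).2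
      rw [← abs_mul]
      congr 1
      field_simp
    · refine Finset.sum_congr rfl fun i hi => ?_
      have hxi : x i = 0 := not_not.1 (Finset.mem_filter.1 hi).2
      rw [hxi, mul_zero, zero_sub, abs_neg]
  have hHmin : ∀ τ, H (u i1 / x i1) ≤ H τ := by
    intro τ
    rw [hHsplit, hHsplit]
    exact add_le_add_left (hmin τ) _
  set c : ℝ := x i1 / u i1 with hc
  set ν1 : ℝ := u i1 / x i1 with hν1
  have hcν : c * ν1 = 1 := by rw [hc, hν1]; field_simp
  set d : Fin m → ℝ := fun i => x i - c * u i with hdd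
  set e : Fin n → ℝ := fun j => y j - ν1 * v j with hee
  set P : ℝ := ∑ i, |u i| with hP
  have hdH : ∑ i, |d i| = |c| * H ν1 := by
    simp only [hH]
    rw [Finset.mul_sum]
    refine Finset.sum_congr rfl fun i _ => ?_
    rw [← abs_mul]
    congr 1
    show x i - c * u i = c * (ν1 * x i - u i)
    linear_combination (-(x i)) * hcν
  have heK : ∑ j, |e j| = |ν1| * K c := by
    simp only [hK]
    rw [Finset.mul_sum]
    refine Finset.sum_congr rfl fun j _ => ?_
    rw [← abs_mul]
    congr 1
    show y j - ν1 * v j = ν1 * (c * y j - v j)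
    linear_combination (-(y j)) * hcν
  have hH0 : H 0 = P := by
    simp only [hH, hP]
    exact Finset.sum_congr rfl fun i _ => by rw [zero_mul, zero_sub, abs_neg]
  have hHν : H ν1 ≤ P := by
    rw [← hH0, hν1]
    exact hHmin 0
  have hKc : ∀ s, K c ≤ K s := by
    intro s
    rw [hc]
    exact hF2 i1 hu1 s
  have hKnn : 0 ≤ K c := Finset.sum_nonneg fun j _ => abs_nonneg _
  have hPK : P * K c ≤ F u v (x, y) := by
    have hFsum : F u v (x, y) = ∑ i, |u i| * K (x i / u i) :=
      Finset.sum_congr rfl fun i _ => hF4 i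
    rw [hFsum, hP, Finset.sum_mul]
    exact Finset.sum_le_sum fun i _ => mul_le_mul_of_nonneg_left (hKc _) (abs_nonneg _)
  have hHnn : 0 ≤ H ν1 := Finset.sum_nonneg fun i _ => abs_nonneg _
  have hD : (∑ i, |d i|) * (∑ j, |e j|) ≤ F u v (x, y) := by
    rw [hdH, heK]
    have habs : |c| * |ν1| = 1 := by rw [← abs_mul, hcν, abs_one]
    calc |c| * H ν1 * (|ν1| * K c) = (|c| * |ν1|) * (H ν1 * K c) := by ring
      _ = H ν1 * K c := by rw [habs, one_mul]
      _ ≤ P * K c := mul_le_mul_of_nonneg_right hHν hKnn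
      _ ≤ F u v (x, y) := hPK
  -- the descent path
  set p : ℝ → (Fin m → ℝ) × (Fin n → ℝ) :=
    fun t => (fun i => x i - t * d i, fun j => y j - t * e j) with hp
  have hcont : Continuous p := by
    refine Continuous.prodMk ?_ ?_
    · exact continuous_pi fun i => continuous_const.sub (continuous_id.mul continuous_const)
    · exact continuous_pi fun j => continuous_const.sub (continuous_id.mul continuous_const)
  have hp0 : p 0 = (x, y) := by
    rw [hp]
    exact Prod.ext (funext fun i => by simp) (funext fun j => by simp)
  have htend : Filter.Tendsto p (nhdsWithin 0 (Set.Ioi 0)) (nhds ((x, y))) := by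
    have := hcont.tendsto 0
    rw [hp0] at this
    exact this.mono_left nhdsWithin_le_nhds
  refine (not_isLocalMin_of_descent p htend ?_) hloc
  rintro t ⟨ht0, ht1⟩
  have hid : ∀ i j, (x i - t * d i) * (y j - t * e j) - u i * v j
      = (1 - t) * ((x i * y j - u i * v j) - t * (d i * e j)) := by
    intro i j
    rw [hdd, hee]
    show (x i - t * (x i - c * u i)) * (y j - t * (y j - ν1 * v j)) - u i * v j
      = (1 - t) * ((x i * y j - u i * v j) - t * ((x i - c * u i) * (y j - ν1 * v j)))
    linear_combination (t * (u i * v j)) * hcν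
  have hDsplit : ∑ i, ∑ j, |d i * e j| = (∑ i, |d i|) * (∑ j, |e j|) := by
    rw [Finset.sum_mul_sum]
    exact Finset.sum_congr rfl fun i _ => Finset.sum_congr rfl fun j _ => abs_mul _ _
  have h1t : (0:ℝ) < 1 - t := by linarith
  calc F u v (p t)
      = (1 - t) * (∑ i, ∑ j, |(x i * y j - u i * v j) - t * (d i * e j)|) := by
        show (∑ i, ∑ j, |(x i - t * d i) * (y j - t * e j) - u i * v j|) = _
        rw [Finset.mul_sum]
        refine Finset.sum_congr rfl fun i _ => ?_
        rw [Finset.mul_sum]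
        refine Finset.sum_congr rfl fun j _ => ?_
        rw [hid i j, abs_mul, abs_of_pos h1t]
    _ ≤ (1 - t) * ((∑ i, ∑ j, |x i * y j - u i * v j|) + t * ((∑ i, |d i|) * (∑ j, |e j|))) := by
        refine mul_le_mul_of_nonneg_left ?_ h1t.le
        rw [← hDsplit, Finset.mul_sum]
        rw [← Finset.sum_add_distrib]
        refine Finset.sum_le_sum fun i _ => ?_
        rw [Finset.mul_sum, ← Finset.sum_add_distrib]
        refine Finset.sum_le_sum fun j _ => ?_
        calc |(x i * y j - u i * v j) - t * (d i * e j)|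
            ≤ |x i * y j - u i * v j| + |t * (d i * e j)| := abs_sub _ _
          _ = |x i * y j - u i * v j| + t * |d i * e j| := by
              rw [abs_mul, abs_of_pos ht0]
    _ ≤ (1 - t) * (F u v (x, y) + t * F u v (x, y)) := by
        refine mul_le_mul_of_nonneg_left ?_ h1t.le
        have : F u v (x, y) = ∑ i, ∑ j, |x i * y j - u i * v j| := rfl
        rw [← this]
        have := mul_le_mul_of_nonneg_left hD ht0.le
        linarith
    _ < F u v (x, y) := by
        have ht2 : 0 < t * t * F u v (x, y) := mul_pos (mul_pos ht0 ht0) hf0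
        nlinarith [ht2]



lemma F_swap {m n : ℕ} (u : Fin m → ℝ) (v : Fin n → ℝ) (a : Fin m → ℝ) (b : Fin n → ℝ) :
    F u v (a, b) = F v u (b, a) := by
  unfold F
  rw [Finset.sum_comm]
  exact Finset.sum_congr rfl fun j _ => Finset.sum_congr rfl fun i _ => by
    congr 1; ring

lemma isLocalMin_swap {m n : ℕ} (u : Fin m → ℝ) (v : Fin n → ℝ) (x : Fin m → ℝ)
    (y : Fin n → ℝ) (h : IsLocalMin (F u v) (x, y)) : IsLocalMin (F v u) (y, x) := by
  have h2 := isLocalMin_comp h (g := Prod.swap) (b := (y, x))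
    continuous_swap.continuousAt rfl
  have hFF : (fun q : (Fin n → ℝ) × (Fin m → ℝ) => F u v (Prod.swap q)) = F v u := by
    funext q
    show F u v (q.2, q.1) = F v u q
    rw [F_swap]
  rw [hFF] at h2
  exact h2

lemma F_self {m n : ℕ} (u : Fin m → ℝ) (v : Fin n → ℝ) : F u v (u, v) = 0 := by
  unfold F; simp

lemma F_0y {m n : ℕ} (u : Fin m → ℝ) (v : Fin n → ℝ) (y : Fin n → ℝ) :
    F u v (0, y) = ∑ i, ∑ j, |u i * v j| := by
  unfold F; simp

lemma Fuv_pos {m n : ℕ} {u : Fin m → ℝ} {v : Fin n → ℝ} (hu : u ≠ 0) (hv : v ≠ 0) :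
    0 < ∑ i, ∑ j, |u i * v j| := by
  obtain ⟨i0, hi0⟩ := Function.ne_iff.1 hu
  obtain ⟨j0, hj0⟩ := Function.ne_iff.1 hv
  simp only [Pi.zero_apply] at hi0 hj0
  refine Finset.sum_pos' (fun i _ => Finset.sum_nonneg fun j _ => abs_nonneg _)
    ⟨i0, Finset.mem_univ _, ?_⟩
  refine Finset.sum_pos' (fun j _ => abs_nonneg _)
    ⟨j0, Finset.mem_univ _, abs_pos.2 (mul_ne_zero hi0 hj0)⟩

end SLM

/-- If `u ≠ 0` and `v ≠ 0`, then `(x,y)` is a spurious local minimum of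
`f(x,y) = Σᵢ Σⱼ |xᵢ yⱼ − uᵢ vⱼ|` (a local minimum that is not a global minimum) iff
either `|Σ_{uᵢ≠0} sgn(uᵢ) xᵢ| < Σ_{uᵢ=0} |xᵢ|` and `y = 0`, or `x = 0` and
`|Σ_{vⱼ≠0} sgn(vⱼ) yⱼ| < Σ_{vⱼ=0} |yⱼ|`. -/
theorem spurious_local_minima_characterization (m n : ℕ) (hm : 1 ≤ m) (hn : 1 ≤ n)
    (u : Fin m → ℝ) (v : Fin n → ℝ) (hu : u ≠ 0) (hv : v ≠ 0)
    (x : Fin m → ℝ) (y : Fin n → ℝ) :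
    (IsLocalMin (fun q : (Fin m → ℝ) × (Fin n → ℝ) =>
          ∑ i, ∑ j, |q.1 i * q.2 j - u i * v j|) (x, y) ∧
      ¬ (∀ p : (Fin m → ℝ) × (Fin n → ℝ),
          (∑ i, ∑ j, |x i * y j - u i * v j|) ≤ ∑ i, ∑ j, |p.1 i * p.2 j - u i * v j|))
    ↔
    ((|∑ i ∈ Finset.univ.filter (fun i => u i ≠ 0), Real.sign (u i) * x i|
          < (∑ i ∈ Finset.univ.filter (fun i => u i = 0), |x i|) ∧ y = 0) ∨
      (x = 0 ∧
        |∑ j ∈ Finset.univ.filter (fun j => v j ≠ 0), Real.sign (v j) * y j|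
          < ∑ j ∈ Finset.univ.filter (fun j => v j = 0), |y j|)) := by
  classical
  constructor
  · rintro ⟨hloc, hng⟩
    have hloc' : IsLocalMin (SLM.F u v) (x, y) := hloc
    by_cases hy0 : y = 0
    · subst hy0
      left
      refine ⟨?_, rfl⟩
      by_contra hc
      exact (SLM.coreB u v hu hv x hc) hloc'
    · by_cases hx0 : x = 0
      · subst hx0
        right
        refine ⟨rfl, ?_⟩
        by_contra hc
        have hswap : IsLocalMin (SLM.F v u) (y, 0) := SLM.isLocalMin_swap u v 0 y hloc'
        exact (SLM.coreB v u hv hu y hc) hswap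
      · have hg := SLM.coreC u v hu x y hx0 hy0 hloc'
        exact absurd hg hng
  · rintro (⟨hc, hy0⟩ | ⟨hx0, hc⟩)
    · subst hy0
      refine ⟨SLM.coreA u v x hc, ?_⟩
      intro hg
      have h1 : SLM.F u v (x, 0) ≤ SLM.F u v (u, v) := hg (u, v)
      rw [SLM.F_self, SLM.F_x0] at h1
      exact absurd h1 (not_le.2 (SLM.Fuv_pos hu hv))
    · subst hx0
      refine ⟨?_, ?_⟩
      · exact SLM.isLocalMin_swap v u y 0 (SLM.coreA v u y hc)
      · intro hg
        have h1 : SLM.F u v (0, y) ≤ SLM.F u v (u, v) := hg (u, v)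
        rw [SLM.F_self, SLM.F_0y] at h1
        exact absurd h1 (not_le.2 (SLM.Fuv_pos hu hv))
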